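/- Suppose (k,c) is an optimal pair for the growth problem, with k(0) = k₀ > 0, c(t) ≥ c₋(2t₀) > 0 for all t in [0, 2t₀], f continuous with f(0,K) = 0 for all K in the range of the bounded continuous function K(·), and k absolutely continuous with k' = f(k,K) − c a.e. Then k(t) > 0 for every t ≥ 0; in particular there is no t₀ with k(t₀) = 0. -/

import Mathlib

open MeasureTheory Set

theorem stmt_10 (f : ℝ → ℝ → ℝ) (K k k' c : ℝ → ℝ) (k₀ : ℝ)
    (hf : Continuous fun p : ℝ × ℝ => f p.1 p.2)
    (hf0 : ∀ y, f 0 y = 0)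
    (hKc : Continuous K) (hKb : ∃ C, ∀ t, |K t| ≤ C)
    (hk₀ : 0 < k₀)
    (hint : ∀ t, 0 ≤ t → IntervalIntegrable k' volume 0 t)
    (hAC : ∀ t, 0 ≤ t → k t = k₀ + ∫ s in (0:ℝ)..t, k' s)
    (hknn : ∀ t, 0 ≤ t → 0 ≤ k t)
    (hsat : ∀ᵐ t ∂(volume.restrict (Ici (0:ℝ))), k' t = f (k t) (K t) - c t)
    (hclb : ∀ T, 0 < T → ∃ cm, 0 < cm ∧ ∀ t ∈ Icc (0:ℝ) T, cm ≤ c t) :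
    ∀ t, 0 ≤ t → 0 < k t := by
  intro t ht
  by_contra hcon
  push_neg at hcon
  have hkt0 : k t = 0 := le_antisymm hcon (hknn t ht)
  obtain ⟨cm, hcm, hcb⟩ := hclb (t + 1) (by linarith)
  -- continuity of k on [0, t+1]
  have hkc : ContinuousOn k (Icc 0 (t + 1)) := by
    have hprim : ContinuousOn (fun x => ∫ s in (0:ℝ)..x, k' s) (Icc 0 (t + 1)) := by
      have h := intervalIntegral.continuousOn_primitive_interval'
        (hint (t + 1) (by linarith)) (left_mem_uIcc (a := (0:ℝ)) (b := t + 1))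
      rwa [uIcc_of_le (show (0:ℝ) ≤ t + 1 by linarith)] at h
    have h2 : ContinuousOn (fun x => k₀ + ∫ s in (0:ℝ)..x, k' s) (Icc 0 (t + 1)) :=
      continuousOn_const.add hprim
    exact h2.congr fun x hx => hAC x hx.1
  -- g = f(k ·, K ·) continuous on [0, t+1], g t = 0
  have hgc : ContinuousOn (fun s => f (k s) (K s)) (Icc 0 (t + 1)) :=
    hf.comp_continuousOn (hkc.prodMk hKc.continuousOn)
  have hgt : f (k t) (K t) = 0 := by rw [hkt0]; exact hf0 _
  have htmem : t ∈ Icc (0:ℝ) (t + 1) := ⟨ht, by linarith⟩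
  have hcwa := (hgc t htmem).tendsto
  have hev : ∀ᶠ s in nhdsWithin t (Icc 0 (t + 1)), f (k s) (K s) < cm / 2 :=
    hcwa.eventually_lt_const (by rw [hgt]; linarith)
  obtain ⟨ε, hε, hevb⟩ := Metric.mem_nhdsWithin_iff.mp hev
  set δ := min (ε / 2) (1 / 2) with hδdef
  have hδ : 0 < δ := by positivity
  have hδ1 : δ ≤ 1 / 2 := min_le_right _ _
  have hδε : δ < ε := lt_of_le_of_lt (min_le_left _ _) (by linarith)
  set b := t + δ with hbdef
  have htb : t ≤ b := by simp [hbdef]; linarith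
  have hb0 : (0:ℝ) ≤ b := le_trans ht htb
  have hsub : Icc t b ⊆ Icc 0 (t + 1) := by
    apply Icc_subset_Icc ht; simp only [hbdef]; linarith
  -- integrability on [t, b]
  have hib : IntervalIntegrable k' volume t b := by
    apply (hint b hb0).mono_set
    rw [uIcc_of_le htb, uIcc_of_le hb0]
    exact Icc_subset_Icc (by linarith) le_rfl
  -- k b = k t + ∫ t..b k'
  have hkb : k b = k t + ∫ s in t..b, k' s := by
    rw [hAC b hb0, hAC t ht]
    have := intervalIntegral.integral_add_adjacent_intervals (hint t ht) hib
    rw [← this]; ring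
  -- a.e. bound on [t, b]
  have hsat' : ∀ᵐ s ∂(volume.restrict (Icc t b)), k' s = f (k s) (K s) - c s :=
    ae_restrict_of_ae_restrict_of_subset (fun s hs => (hsub hs).1) hsat
  have hbound : ∀ᵐ s ∂(volume.restrict (Icc t b)), k' s ≤ -(cm / 2) := by
    filter_upwards [hsat', ae_restrict_mem measurableSet_Icc] with s hs hmem
    have h1 : f (k s) (K s) < cm / 2 := by
      apply hevb
      refine ⟨?_, hsub hmem⟩
      have hsb : s ≤ t + δ := hmem.2
      have hst : t ≤ s := hmem.1
      simp only [Metric.mem_ball, Real.dist_eq, abs_sub_lt_iff]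
      constructor <;> linarith
    have h2 : cm ≤ c s := hcb s (hsub hmem)
    rw [hs]; linarith
  have hint' : (∫ s in t..b, k' s) ≤ ∫ s in t..b, -(cm / 2) :=
    intervalIntegral.integral_mono_ae_restrict htb hib
      (intervalIntegrable_const) hbound
  rw [intervalIntegral.integral_const, smul_eq_mul] at hint'
  have : k b ≤ -(δ * (cm / 2)) := by
    rw [hkb, hkt0]
    have : b - t = δ := by simp [hbdef]
    rw [this] at hint'
    linarith
  have := hknn b hb0
  nlinarith
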